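/- With step sizes ρ_t = 2/(t+1), for every t ≥ 1 the generalized conditional gradient iterates satisfy g_dual(y_*) − g_dual(y_t) ≤ 2R²/(μ(t+1)). -/

import Mathlib

open scoped RealInnerProductSpace
open Finset

noncomputable section

/-- `y` is a subgradient of `f` at `z`. -/
def IsSubgrad {n : ℕ} (f : EuclideanSpace ℝ (Fin n) → ℝ)
    (z y : EuclideanSpace ℝ (Fin n)) : Prop :=
  ∀ z', f z + ⟪y, z' - z⟫ ≤ f z'

/-- Dual objective `g_dual(y) = -h*(-Aᵀy) - f*(y)`, expressed via the conjugate
function values `hstar` of `h` and `fstar` of `f`. -/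
def gDual {p n : ℕ} (A : EuclideanSpace ℝ (Fin p) →L[ℝ] EuclideanSpace ℝ (Fin n))
    (hstar : EuclideanSpace ℝ (Fin p) → ℝ) (fstar : EuclideanSpace ℝ (Fin n) → ℝ)
    (y : EuclideanSpace ℝ (Fin n)) : ℝ :=
  -hstar (-((ContinuousLinearMap.adjoint A) y)) - fstar y

/-- Duality gap `gap(x,y) = (h(x) + f(Ax)) - g_dual(y)`. -/
def dualityGap {p n : ℕ} (A : EuclideanSpace ℝ (Fin p) →L[ℝ] EuclideanSpace ℝ (Fin n))
    (f : EuclideanSpace ℝ (Fin n) → ℝ) (h : EuclideanSpace ℝ (Fin p) → ℝ)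
    (hstar : EuclideanSpace ℝ (Fin p) → ℝ) (fstar : EuclideanSpace ℝ (Fin n) → ℝ)
    (x : EuclideanSpace ℝ (Fin p)) (y : EuclideanSpace ℝ (Fin n)) : ℝ :=
  (h x + f (A x)) - gDual A hstar fstar y

set_option maxHeartbeats 2000000 in
/-- Convergence of generalized conditional gradient without line search: dual suboptimality. -/
theorem cg_thm_6 {p n : ℕ}
    (A : EuclideanSpace ℝ (Fin p) →L[ℝ] EuclideanSpace ℝ (Fin n))
    (f : EuclideanSpace ℝ (Fin n) → ℝ)
    (hf : ConvexOn ℝ Set.univ f)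
    (B : NNReal) (hlip : LipschitzWith B f)
    (μ : ℝ) (hμ : 0 < μ)
    (h : EuclideanSpace ℝ (Fin p) → ℝ)
    (hhdiff : Differentiable ℝ h)
    (hsc : StrongConvexOn Set.univ μ h)
    (C : Set (EuclideanSpace ℝ (Fin n)))
    (fstar : EuclideanSpace ℝ (Fin n) → ℝ)
    (hC : ∀ y, y ∈ C ↔ BddAbove (Set.range fun z => ⟪y, z⟫ - f z))
    (hfstar : ∀ y ∈ C, IsLUB (Set.range fun z => ⟪y, z⟫ - f z) (fstar y))
    (hstar : EuclideanSpace ℝ (Fin p) → ℝ)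
    (hstar' : EuclideanSpace ℝ (Fin p) → EuclideanSpace ℝ (Fin p))
    (hhstar_ub : ∀ z x', ⟪z, x'⟫ - h x' ≤ hstar z)
    (hhstar_eq : ∀ z, ⟪z, hstar' z⟫ - h (hstar' z) = hstar z)
    (hhstar_uniq : ∀ z x', ⟪z, x'⟫ - h x' = hstar z → x' = hstar' z)
    (x : ℕ → EuclideanSpace ℝ (Fin p))
    (y : ℕ → EuclideanSpace ℝ (Fin n))
    (ybar : ℕ → EuclideanSpace ℝ (Fin n))
    (ρ : ℕ → ℝ)
    (hρmem : ∀ t, 1 ≤ t → 0 ≤ ρ t ∧ ρ t ≤ 1)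
    (hy0 : y 0 ∈ C)
    (hx : ∀ t, x t = hstar' (-((ContinuousLinearMap.adjoint A) (y t))))
    (hybar : ∀ t, ybar t ∈ C ∧ ∀ y' ∈ C,
      ⟪y', A (x t)⟫ - fstar y' ≤ ⟪ybar t, A (x t)⟫ - fstar (ybar t))
    (hrec : ∀ t, 1 ≤ t → y t = (1 - ρ t) • y (t - 1) + ρ t • ybar (t - 1))
    (hρ : ∀ t, 1 ≤ t → ρ t = 2 / ((t : ℝ) + 1))
    (R : ℝ) (hR0 : 0 ≤ R)
    (hR : ∀ y₁ ∈ C, ∀ y₂ ∈ C, ‖(ContinuousLinearMap.adjoint A) (y₁ - y₂)‖ ≤ R)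
    (ys : EuclideanSpace ℝ (Fin n)) (hysC : ys ∈ C)
    (hys : ∀ y' ∈ C, gDual A hstar fstar y' ≤ gDual A hstar fstar ys)
    :
    ∀ t : ℕ, 1 ≤ t →
      gDual A hstar fstar ys - gDual A hstar fstar (y t) ≤
        2 * R ^ 2 / (μ * ((t : ℝ) + 1)) := by
  -- strong maximality of hstar' z
  have lemA : ∀ z x', ⟪z, x'⟫ - h x' + μ / 2 * ‖x' - hstar' z‖ ^ 2 ≤ hstar z := by
    intro z x'
    have key : ∀ a : ℝ, 0 ≤ a → a < 1 →
        a * (μ / 2 * ‖x' - hstar' z‖ ^ 2) ≤ hstar z - (⟪z, x'⟫ - h x') := by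
      intro a ha ha1
      have hb : (0:ℝ) < 1 - a := by linarith
      have hcomb := hsc.2 (Set.mem_univ (hstar' z)) (Set.mem_univ x') ha hb.le
        (by ring : a + (1 - a) = 1)
      simp only [smul_eq_mul] at hcomb
      rw [norm_sub_rev] at hcomb
      have hub := hhstar_ub z (a • hstar' z + (1 - a) • x')
      have hinner : ⟪z, a • hstar' z + (1 - a) • x'⟫
          = a * ⟪z, hstar' z⟫ + (1 - a) * ⟪z, x'⟫ := by
        rw [inner_add_right, real_inner_smul_right, real_inner_smul_right]
      have heq := hhstar_eq z
      have e5 : a * ⟪z, hstar' z⟫ - a * h (hstar' z) = a * hstar z := by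
        rw [← heq]; ring
      have main : (1 - a) * (a * (μ / 2 * ‖x' - hstar' z‖ ^ 2))
          ≤ (1 - a) * (hstar z - (⟪z, x'⟫ - h x')) := by
        nlinarith [hub, hcomb, hinner, e5]
      exact le_of_mul_le_mul_left main hb
    by_contra hcon
    push_neg at hcon
    set K := μ / 2 * ‖x' - hstar' z‖ ^ 2 with hK
    set M := hstar z - (⟪z, x'⟫ - h x') with hM
    have hM0 : 0 ≤ M := by have := hhstar_ub z x'; rw [hM]; linarith
    have hMK : M < K := by rw [hM, hK]; linarith
    have hKpos : 0 < K := lt_of_le_of_lt hM0 hMK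
    have hdnn : 0 ≤ M / K := div_nonneg hM0 hKpos.le
    have hdlt : M / K < 1 := (div_lt_one hKpos).2 hMK
    have h2 := key ((M / K + 1) / 2) (by linarith) (by linarith)
    have e : (M / K + 1) / 2 * K = (M + K) / 2 := by field_simp
    rw [e] at h2
    linarith
  -- smoothness of hstar
  have lemB : ∀ z z', hstar z' ≤ hstar z + ⟪z' - z, hstar' z⟫ + ‖z' - z‖ ^ 2 / (2 * μ) := by
    intro z z'
    have h1 := lemA z (hstar' z')
    have h2 := hhstar_eq z'
    have e1 : ⟪z', hstar' z'⟫ = ⟪z, hstar' z'⟫ + ⟪z' - z, hstar' z'⟫ := by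
      rw [inner_sub_left]; ring
    have e2 : ⟪z' - z, hstar' z'⟫ = ⟪z' - z, hstar' z⟫ + ⟪z' - z, hstar' z' - hstar' z⟫ := by
      rw [inner_sub_right]; ring
    have cs : ⟪z' - z, hstar' z' - hstar' z⟫ ≤ ‖z' - z‖ * ‖hstar' z' - hstar' z‖ :=
      real_inner_le_norm _ _
    have amgm : ‖z' - z‖ * ‖hstar' z' - hstar' z‖
        ≤ μ / 2 * ‖hstar' z' - hstar' z‖ ^ 2 + ‖z' - z‖ ^ 2 / (2 * μ) := by
      have h2μ : (0:ℝ) < 2 * μ := by linarith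
      rw [← sub_le_iff_le_add', le_div_iff₀ h2μ]
      nlinarith [sq_nonneg (μ * ‖hstar' z' - hstar' z‖ - ‖z' - z‖)]
    linarith
  -- gradient inequality for hstar
  have lemC : ∀ z z', hstar z + ⟪z' - z, hstar' z⟫ ≤ hstar z' := by
    intro z z'
    have h1 := hhstar_ub z' (hstar' z)
    have h2 := hhstar_eq z
    have e1 : ⟪z', hstar' z⟫ = ⟪z, hstar' z⟫ + ⟪z' - z, hstar' z⟫ := by
      rw [inner_sub_left]; ring
    linarith
  -- convexity of C and fstar
  have lemD : ∀ y₁ ∈ C, ∀ y₂ ∈ C, ∀ a b : ℝ, 0 ≤ a → 0 ≤ b → a + b = 1 →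
      (a • y₁ + b • y₂) ∈ C ∧ fstar (a • y₁ + b • y₂) ≤ a * fstar y₁ + b * fstar y₂ := by
    intro y₁ h₁ y₂ h₂ a b ha hb hab
    have hub : ∀ z, ⟪a • y₁ + b • y₂, z⟫ - f z ≤ a * fstar y₁ + b * fstar y₂ := by
      intro z
      have u1 : ⟪y₁, z⟫ - f z ≤ fstar y₁ := (hfstar y₁ h₁).1 ⟨z, rfl⟩
      have u2 : ⟪y₂, z⟫ - f z ≤ fstar y₂ := (hfstar y₂ h₂).1 ⟨z, rfl⟩
      have e : ⟪a • y₁ + b • y₂, z⟫ = a * ⟪y₁, z⟫ + b * ⟪y₂, z⟫ := by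
        rw [inner_add_left, real_inner_smul_left, real_inner_smul_left]
      have efz : a * f z + b * f z = f z := by rw [← add_mul, hab, one_mul]
      have m1 := mul_le_mul_of_nonneg_left u1 ha
      have m2 := mul_le_mul_of_nonneg_left u2 hb
      nlinarith [m1, m2]
    have hmem : (a • y₁ + b • y₂) ∈ C := (hC _).2 ⟨a * fstar y₁ + b * fstar y₂, by
      rintro _ ⟨z, rfl⟩; exact hub z⟩
    exact ⟨hmem, (hfstar _ hmem).2 (by rintro _ ⟨z, rfl⟩; exact hub z)⟩
  -- all iterates in C
  have yC : ∀ t, y t ∈ C := by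
    intro t
    induction t with
    | zero => exact hy0
    | succ s ih =>
      have ht : 1 ≤ s + 1 := Nat.succ_le_succ (Nat.zero_le s)
      obtain ⟨h0, h1⟩ := hρmem (s + 1) ht
      rw [hrec (s + 1) ht]
      simp only [Nat.add_sub_cancel]
      exact (lemD _ ih _ (hybar s).1 _ _ (by linarith) h0 (by ring)).1
  set At := ContinuousLinearMap.adjoint A with hAt
  -- per-step recursion
  have step : ∀ t, 1 ≤ t →
      gDual A hstar fstar ys - gDual A hstar fstar (y t) ≤
        (1 - ρ t) * (gDual A hstar fstar ys - gDual A hstar fstar (y (t - 1)))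
          + (ρ t) ^ 2 * R ^ 2 / (2 * μ) := by
    intro t ht
    obtain ⟨hρ0, hρ1⟩ := hρmem t ht
    set s := t - 1 with hs
    set yp := y s with hyp
    set yb := ybar s with hyb
    set xp := x s with hxpdef
    have hyrec : y t = (1 - ρ t) • yp + ρ t • yb := hrec t ht
    have hxp : xp = hstar' (-(At yp)) := hx s
    have hR2 : ‖At (yb - yp)‖ ≤ R := hR yb (hybar s).1 yp (yC s)
    have h2μ : (0:ℝ) < 2 * μ := by linarith
    -- smoothness applied
    have hsm := lemB (-(At yp)) (-(At (y t)))
    have hd1 : -(At (y t)) - -(At yp) = At (yp - y t) := by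
      rw [map_sub]; abel
    have hd2 : yp - y t = (-(ρ t)) • (yb - yp) := by
      rw [hyrec]; module
    have hip : ⟪-(At (y t)) - -(At yp), hstar' (-(At yp))⟫
        = -(ρ t) * ⟪yb - yp, A xp⟫ := by
      rw [hd1, hd2, map_smul, real_inner_smul_left, hxp,
        ContinuousLinearMap.adjoint_inner_left]
    have hnm : ‖-(At (y t)) - -(At yp)‖ ^ 2 = (ρ t) ^ 2 * ‖At (yb - yp)‖ ^ 2 := by
      rw [hd1, hd2, map_smul, norm_smul]
      simp [mul_pow]
    have hnm2 : ‖-(At (y t)) - -(At yp)‖ ^ 2 / (2 * μ) ≤ (ρ t) ^ 2 * R ^ 2 / (2 * μ) := by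
      rw [hnm, div_le_div_iff₀ h2μ h2μ]
      have hb : ‖At (yb - yp)‖ ^ 2 ≤ R ^ 2 := by
        nlinarith [norm_nonneg (At (yb - yp))]
      have hb2 := mul_le_mul_of_nonneg_left hb (sq_nonneg (ρ t))
      nlinarith [hb2, h2μ]
    have hsm2 : hstar (-(At (y t))) ≤ hstar (-(At yp))
        + (-(ρ t) * (⟪yb, A xp⟫ - ⟪yp, A xp⟫)) + (ρ t) ^ 2 * R ^ 2 / (2 * μ) := by
      rw [hip] at hsm
      have e : ⟪yb - yp, A xp⟫ = ⟪yb, A xp⟫ - ⟪yp, A xp⟫ := inner_sub_left _ _ _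
      rw [e] at hsm
      linarith
    -- fstar convexity
    have hfc : fstar (y t) ≤ (1 - ρ t) * fstar yp + ρ t * fstar yb := by
      rw [hyrec]
      exact (lemD yp (yC s) yb (hybar s).1 (1 - ρ t) (ρ t) (by linarith) hρ0 (by ring)).2
    -- optimality transfer
    have hG1 : gDual A hstar fstar ys - gDual A hstar fstar yp ≤
        (⟪yb, A xp⟫ - fstar yb) - (⟪yp, A xp⟫ - fstar yp) := by
      have grad := lemC (-(At yp)) (-(At ys))
      have hd3 : -(At ys) - -(At yp) = At (yp - ys) := by rw [map_sub]; abel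
      have hip2 : ⟪-(At ys) - -(At yp), hstar' (-(At yp))⟫ = ⟪yp - ys, A xp⟫ := by
        rw [hd3, hxp, ContinuousLinearMap.adjoint_inner_left]
      rw [hip2] at grad
      have hopt := (hybar s).2 ys hysC
      have e : ⟪yp - ys, A xp⟫ = ⟪yp, A xp⟫ - ⟪ys, A xp⟫ := inner_sub_left _ _ _
      rw [e] at grad
      simp only [← hxpdef] at hopt
      simp only [gDual, ← hAt]
      linarith
    -- combine
    have hcomb : gDual A hstar fstar ys - gDual A hstar fstar (y t)
        ≤ (gDual A hstar fstar ys - gDual A hstar fstar yp)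
          - ρ t * ((⟪yb, A xp⟫ - fstar yb) - (⟪yp, A xp⟫ - fstar yp))
          + (ρ t) ^ 2 * R ^ 2 / (2 * μ) := by
      simp only [gDual, ← hAt]
      have hfc' := hfc
      nlinarith [hsm2, hfc']
    have hmul : ρ t * (gDual A hstar fstar ys - gDual A hstar fstar yp)
        ≤ ρ t * ((⟪yb, A xp⟫ - fstar yb) - (⟪yp, A xp⟫ - fstar yp)) :=
      mul_le_mul_of_nonneg_left hG1 hρ0
    nlinarith [hcomb, hmul]
  -- final induction
  intro t ht
  induction t with
  | zero => omega
  | succ s ih =>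
    rcases Nat.eq_zero_or_pos s with rfl | hs
    · -- base case t = 1
      have st := step 1 le_rfl
      have hρ1 : ρ 1 = 1 := by rw [hρ 1 le_rfl]; norm_num
      rw [hρ1] at st
      have h2μ : (0:ℝ) < 2 * μ := by linarith
      have hfin : (1:ℝ) ^ 2 * R ^ 2 / (2 * μ) ≤ 2 * R ^ 2 / (μ * (((0+1 : ℕ) : ℝ) + 1)) := by
        push_cast
        rw [div_le_div_iff₀ h2μ (by linarith)]
        nlinarith [sq_nonneg R]
      linarith
    · have hs1 : 1 ≤ s := hs
      have ih' := ih hs1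
      have st := step (s + 1) (by omega)
      simp only [Nat.add_sub_cancel] at st
      have hρs : ρ (s + 1) = 2 / ((s : ℝ) + 2) := by
        rw [hρ (s + 1) (by omega)]; push_cast; ring_nf
      rw [hρs] at st
      set N : ℝ := (s : ℝ) with hN
      have hN0 : (0:ℝ) ≤ N := Nat.cast_nonneg s
      have hN1 : (0:ℝ) < N + 1 := by linarith
      have hN2 : (0:ℝ) < N + 2 := by linarith
      have hρnn : (0:ℝ) ≤ 1 - 2 / (N + 2) := by
        rw [sub_nonneg, div_le_one hN2]; linarith
      have hmul : (1 - 2 / (N + 2)) *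
          (gDual A hstar fstar ys - gDual A hstar fstar (y s))
          ≤ (1 - 2 / (N + 2)) * (2 * R ^ 2 / (μ * (N + 1))) :=
        mul_le_mul_of_nonneg_left ih' hρnn
      have key : (1 - 2 / (N + 2)) * (2 * R ^ 2 / (μ * (N + 1)))
          + (2 / (N + 2)) ^ 2 * R ^ 2 / (2 * μ) ≤ 2 * R ^ 2 / (μ * (N + 2)) := by
        have e1 : (1:ℝ) - 2 / (N + 2) = N / (N + 2) := by
          field_simp; ring
        have e2 : N / (N + 2) * (2 * R ^ 2 / (μ * (N + 1)))
            = (2 * R ^ 2 * N) / (μ * (N + 1) * (N + 2)) := by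
          rw [div_mul_div_comm]; ring_nf
        have e3 : (2 / (N + 2)) ^ 2 * R ^ 2 / (2 * μ)
            = (2 * R ^ 2) / (μ * (N + 2) ^ 2) := by
          rw [div_pow, div_mul_eq_mul_div, div_div]
          rw [div_eq_div_iff (by positivity) (by positivity)]
          ring
        rw [e1, e2, e3]
        rw [div_add_div _ _ (by positivity) (by positivity),
          div_le_div_iff₀ (by positivity) (by positivity)]
        nlinarith [sq_nonneg R, mul_pos hμ hμ, hN0,
          mul_nonneg (mul_nonneg (sq_nonneg R) (mul_pos hμ hμ).le) (sq_nonneg (N + 2)),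
          mul_nonneg (mul_nonneg (mul_nonneg (sq_nonneg R) (mul_pos hμ hμ).le) (sq_nonneg (N + 2))) hN0]
      push_cast
      rw [show ((s:ℝ) + 1 + 1) = N + 2 by rw [hN]; ring]
      linarith
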